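/- The function f(u) = log(1 + e^{-√u}) defined for u ≥ 0 is convex in u. -/

import Mathlib

open Real Set

lemma denom_pos (t : ℝ) : 0 < 1 + Real.exp (-t) := by positivity

lemma g_hasDeriv (t : ℝ) :
    HasDerivAt (fun t => Real.log (1 + Real.exp (-t)))
      (-Real.exp (-t) / (1 + Real.exp (-t))) t := by
  have h1 : HasDerivAt (fun t : ℝ => 1 + Real.exp (-t)) (-Real.exp (-t)) t := by
    simpa using ((Real.hasDerivAt_exp (-t)).comp t (hasDerivAt_neg t)).const_add 1
  exact h1.log (denom_pos t).ne'

lemma g_deriv : deriv (fun t => Real.log (1 + Real.exp (-t)))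
    = fun t => -Real.exp (-t) / (1 + Real.exp (-t))  := by
  funext t; exact (g_hasDeriv t).deriv

lemma g_convex : ConvexOn ℝ Set.univ (fun t => Real.log (1 + Real.exp (-t))) := by
  have hd2 : ∀ t : ℝ, HasDerivAt (fun t => -Real.exp (-t) / (1 + Real.exp (-t)))
      (Real.exp (-t) / (1 + Real.exp (-t)) ^ 2) t := by
    intro t
    have he : HasDerivAt (fun t : ℝ => Real.exp (-t)) (-Real.exp (-t)) t := by
      simpa [Function.comp_def] using (Real.hasDerivAt_exp (-t)).comp t (hasDerivAt_neg t)
    have h1 : HasDerivAt (fun t : ℝ => 1 + Real.exp (-t)) (-Real.exp (-t)) t :=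
      he.const_add 1
    have := he.neg.div h1 (denom_pos t).ne'
    convert this using 1
    · rfl
    · rfl
    · rfl
    · simp only [Pi.neg_apply]; ring
  apply convexOn_univ_of_deriv2_nonneg
  · exact fun t => (g_hasDeriv t).differentiableAt
  · rw [g_deriv]; exact fun t => (hd2 t).differentiableAt
  · intro t
    have : deriv^[2] (fun t => Real.log (1 + Real.exp (-t))) t
        = Real.exp (-t) / (1 + Real.exp (-t)) ^ 2 := by
      rw [Function.iterate_succ, Function.iterate_one, Function.comp_apply, g_deriv]
      exact (hd2 t).deriv
    rw [this]; positivity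

lemma g_antitone : Antitone (fun t => Real.log (1 + Real.exp (-t))) := by
  intro a b hab
  have : Real.exp (-b) ≤ Real.exp (-a) := Real.exp_le_exp.2 (neg_le_neg hab)
  exact Real.log_le_log (denom_pos b) (by linarith)

theorem stmt_6 :
    ConvexOn ℝ (Set.Ici (0 : ℝ))
      (fun u => Real.log (1 + Real.exp (-Real.sqrt u))) := by
  have himg : ((fun x => Real.sqrt x) '' Set.Ici 0) = Set.Ici (0:ℝ) := by
    ext y; constructor
    · rintro ⟨x, -, rfl⟩; exact Real.sqrt_nonneg x
    · intro hy; exact ⟨y ^ 2, sq_nonneg y, Real.sqrt_sq hy⟩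
  have hg : ConvexOn ℝ ((fun x => Real.sqrt x) '' Set.Ici 0)
      (fun t => Real.log (1 + Real.exp (-t))) := by
    rw [himg]; exact g_convex.subset (Set.subset_univ _) (convex_Ici 0)
  exact hg.comp_concaveOn (Real.strictConcaveOn_sqrt.concaveOn) (g_antitone.antitoneOn _)
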